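/- Let (Ω, μ) be a σ-finite measure space, w : Ω → (0,∞) measurable, and f : Ω → [0,∞] measurable. Then ∫₀^∞ f*(t) / (1/w)*(t) dt ≤ ∫_Ω f(x) w(x) dμ(x), where g* denotes the decreasing rearrangement of a nonnegative measurable function g. -/

import Mathlib

open MeasureTheory
open scoped ENNReal

/-- Decreasing rearrangement of a nonnegative (extended-real valued) measurable
function: `g*(t) = inf {s | μ({x | g x > s}) ≤ t}`. -/
noncomputable def rearrangement {Ω : Type*} [MeasurableSpace Ω]
    (μ : Measure Ω) (g : Ω → ℝ≥0∞) (t : ℝ≥0∞) : ℝ≥0∞ :=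
  sInf {s : ℝ≥0∞ | μ {x | s < g x} ≤ t}

lemma volume_inter_Ioi_ofReal_lt (a : ℝ≥0∞) :
    volume ({s : ℝ | ENNReal.ofReal s < a} ∩ Set.Ioi 0) = a := by
  rcases eq_or_ne a ∞ with rfl | ha
  · have h : {s : ℝ | ENNReal.ofReal s < ∞} ∩ Set.Ioi 0 = Set.Ioi 0 := by
      ext s; simp
    rw [h, Real.volume_Ioi]
  · have h : {s : ℝ | ENNReal.ofReal s < a} ∩ Set.Ioi 0 = Set.Ioo 0 a.toReal := by
      ext s
      simp only [Set.mem_inter_iff, Set.mem_setOf_eq, Set.mem_Ioi, Set.mem_Ioo]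
      constructor
      · rintro ⟨h1, h2⟩
        exact ⟨h2, (ENNReal.ofReal_lt_iff_lt_toReal h2.le ha).mp h1⟩
      · rintro ⟨h1, h2⟩
        exact ⟨(ENNReal.ofReal_lt_iff_lt_toReal h1.le ha).mpr h2, h1⟩
    rw [h, Real.volume_Ioo, sub_zero, ENNReal.ofReal_toReal ha]


lemma rearrangement_mem {Ω : Type*} [MeasurableSpace Ω] (μ : Measure Ω)
    (g : Ω → ℝ≥0∞) (τ : ℝ≥0∞) : μ {x | rearrangement μ g τ < g x} ≤ τ := by
  set b := rearrangement μ g τ with hb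
  rcases eq_or_ne b ∞ with h | h
  · have : {x | b < g x} = ∅ := by
      ext x; simp [h]
    rw [this]; simp
  · have hmem : ∀ n : ℕ, μ {x | b + ((n : ℝ≥0∞))⁻¹ < g x} ≤ τ := by
      intro n
      have hlt : b < b + ((n : ℝ≥0∞))⁻¹ := by
        refine ENNReal.lt_add_right h ?_
        simp [ENNReal.inv_ne_zero]
      obtain ⟨s, hs, hs'⟩ := sInf_lt_iff.mp (hb ▸ hlt : sInf {s : ℝ≥0∞ | μ {x | s < g x} ≤ τ} < _)
      exact le_trans (measure_mono fun x hx => lt_trans hs' hx) hs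
    have hun : {x | b < g x} = ⋃ n : ℕ, {x | b + ((n : ℝ≥0∞))⁻¹ < g x} := by
      ext x
      simp only [Set.mem_setOf_eq, Set.mem_iUnion]
      constructor
      · intro hx
        obtain ⟨n, hn⟩ := ENNReal.exists_inv_nat_lt (tsub_pos_of_lt hx).ne'
        exact ⟨n, by
          calc b + ((n : ℝ≥0∞))⁻¹ < b + (g x - b) := ENNReal.add_lt_add_left h hn
          _ = g x := add_tsub_cancel_of_le hx.le⟩
      · rintro ⟨n, hn⟩
        exact lt_of_le_of_lt le_self_add hn
    have hdir : Directed (· ⊆ ·) (fun n : ℕ => {x | b + ((n : ℝ≥0∞))⁻¹ < g x}) := by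
      refine Monotone.directed_le fun m n hmn x hx => ?_
      exact lt_of_le_of_lt (add_le_add_right (ENNReal.inv_le_inv.mpr (by exact_mod_cast hmn : ((m : ℝ≥0∞)) ≤ n)) b) hx
    rw [hun, hdir.measure_iUnion]
    exact iSup_le hmem

lemma lt_measure_of_lt_rearrangement {Ω : Type*} [MeasurableSpace Ω] (μ : Measure Ω)
    (g : Ω → ℝ≥0∞) {τ σ : ℝ≥0∞} (h : σ < rearrangement μ g τ) :
    τ < μ {x | σ < g x} := by
  by_contra hc
  push_neg at hc
  exact absurd (sInf_le (Set.mem_setOf_eq ▸ hc) : rearrangement μ g τ ≤ σ) (not_le.mpr h)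

lemma rearrangement_antitone {Ω : Type*} [MeasurableSpace Ω] (μ : Measure Ω)
    (g : Ω → ℝ≥0∞) : Antitone (rearrangement μ g) := fun τ₁ τ₂ h =>
  sInf_le_sInf fun s hs => le_trans hs h

noncomputable def wstar {Ω : Type*} [MeasurableSpace Ω] (μ : Measure Ω)
    (W : Ω → ℝ≥0∞) (τ : ℝ≥0∞) : ℝ≥0∞ :=
  sSup {r : ℝ≥0∞ | μ {x | W x < r} ≤ τ}

lemma wstar_monotone {Ω : Type*} [MeasurableSpace Ω] (μ : Measure Ω)
    (W : Ω → ℝ≥0∞) : Monotone (wstar μ W) := fun τ₁ τ₂ h =>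
  sSup_le_sSup fun r hr => le_trans hr h

lemma inv_rearrangement_le_wstar {Ω : Type*} [MeasurableSpace Ω] (μ : Measure Ω)
    (W : Ω → ℝ≥0∞) (τ : ℝ≥0∞) :
    (rearrangement μ (fun x => (W x)⁻¹) τ)⁻¹ ≤ wstar μ W τ := by
  apply le_sSup
  have h := rearrangement_mem μ (fun x => (W x)⁻¹) τ
  have heq : {x | W x < (rearrangement μ (fun x => (W x)⁻¹) τ)⁻¹}
      = {x | rearrangement μ (fun x => (W x)⁻¹) τ < (W x)⁻¹} := by
    ext x; exact ENNReal.lt_inv_iff_lt_inv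
  rw [Set.mem_setOf_eq, heq]
  exact h

lemma measure_le_of_lt_wstar {Ω : Type*} [MeasurableSpace Ω] (μ : Measure Ω)
    (W : Ω → ℝ≥0∞) {τ ρ : ℝ≥0∞} (h : ρ < wstar μ W τ) :
    μ {x | W x ≤ ρ} ≤ τ := by
  obtain ⟨ρ', hρ', hlt⟩ := lt_sSup_iff.mp h
  exact le_trans (measure_mono fun x hx => lt_of_le_of_lt hx hlt) hρ'

lemma volume_band (c m : ℝ≥0∞) :
    volume ({t : ℝ | c ≤ ENNReal.ofReal t ∧ ENNReal.ofReal t < m} ∩ Set.Ioi 0)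
      ≤ m - c := by
  rcases eq_or_ne c ∞ with rfl | hc
  · have h : {t : ℝ | ∞ ≤ ENNReal.ofReal t ∧ ENNReal.ofReal t < m} = ∅ := by
      ext t
      simp only [Set.mem_setOf_eq, Set.mem_empty_iff_false, iff_false, not_and]
      intro hle
      exact absurd (lt_of_le_of_lt hle (ENNReal.ofReal_lt_top)) (lt_irrefl _)
    rw [h, Set.empty_inter]
    simp
  rcases eq_or_ne m ∞ with rfl | hm
  · rw [ENNReal.sub_eq_top_iff.mpr ⟨rfl, hc⟩]
    exact le_top
  · have hsub : {t : ℝ | c ≤ ENNReal.ofReal t ∧ ENNReal.ofReal t < m} ∩ Set.Ioi 0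
        ⊆ Set.Ico c.toReal m.toReal := by
      intro t ht
      obtain ⟨⟨h1, h2⟩, h3⟩ := ht
      have ht0 : (0:ℝ) < t := h3
      refine Set.mem_Ico.mpr ⟨?_, ?_⟩
      · have := ENNReal.toReal_mono ENNReal.ofReal_ne_top h1
        rwa [ENNReal.toReal_ofReal ht0.le] at this
      · exact (ENNReal.ofReal_lt_iff_lt_toReal ht0.le hm).mp h2
    refine le_trans (measure_mono hsub) ?_
    rw [Real.volume_Ico, ENNReal.ofReal_sub _ ENNReal.toReal_nonneg,
        ENNReal.ofReal_toReal hm, ENNReal.ofReal_toReal hc]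


lemma ind_one_eq {α β : Type*} {S : Set α} {T : Set β} {a : α} {b : β}
    (h : a ∈ S ↔ b ∈ T) :
    S.indicator (1 : α → ℝ≥0∞) a = T.indicator (1 : β → ℝ≥0∞) b := by
  by_cases hb : b ∈ T
  · rw [Set.indicator_of_mem (h.mpr hb), Set.indicator_of_mem hb]; rfl
  · rw [Set.indicator_of_notMem (fun ha => hb (h.mp ha)),
      Set.indicator_of_notMem hb]

lemma ind_one_zero {α : Type*} {S : Set α} {a : α} (h : a ∉ S) :
    S.indicator (1 : α → ℝ≥0∞) a = 0 := Set.indicator_of_notMem h _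


lemma lintegral_ind_ofReal_lt (a : ℝ≥0∞) :
    (∫⁻ s in Set.Ioi (0 : ℝ),
      ({s : ℝ | ENNReal.ofReal s < a}).indicator (1 : ℝ → ℝ≥0∞) s) = a := by
  have hm : MeasurableSet {s : ℝ | ENNReal.ofReal s < a} :=
    measurableSet_lt ENNReal.measurable_ofReal measurable_const
  rw [lintegral_indicator_one hm, Measure.restrict_apply hm, volume_inter_Ioi_ofReal_lt]

lemma key_lemma {Ω : Type*} [MeasurableSpace Ω] (μ : Measure Ω) [SigmaFinite μ]
    {W : Ω → ℝ≥0∞} (hW : Measurable W) {A : Set Ω} (hA : MeasurableSet A) :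
    ∫⁻ t in Set.Ioi (0 : ℝ),
        ({t : ℝ | ENNReal.ofReal t < μ A}).indicator
          (fun t => wstar μ W (ENNReal.ofReal t)) t
      ≤ ∫⁻ x in A, W x ∂μ := by
  set H : ℝ → ℝ≥0∞ := fun t => wstar μ W (ENNReal.ofReal t) with hH
  have hHmono : Monotone H := fun t₁ t₂ h =>
    wstar_monotone μ W (ENNReal.ofReal_le_ofReal h)
  have hHmeas : Measurable H := hHmono.measurable
  set S : Set (ℝ × ℝ) :=
    {p : ℝ × ℝ | ENNReal.ofReal p.1 < μ A ∧ ENNReal.ofReal p.2 < H p.1} with hSdef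
  have hS : MeasurableSet S := by
    have h1 : MeasurableSet {p : ℝ × ℝ | ENNReal.ofReal p.1 < μ A} :=
      measurableSet_lt (ENNReal.measurable_ofReal.comp measurable_fst) measurable_const
    have h2 : MeasurableSet {p : ℝ × ℝ | ENNReal.ofReal p.2 < H p.1} :=
      measurableSet_lt (ENNReal.measurable_ofReal.comp measurable_snd)
        (hHmeas.comp measurable_fst)
    exact h1.inter h2
  have hlt_meas : ∀ a : ℝ≥0∞, MeasurableSet {s : ℝ | ENNReal.ofReal s < a} := fun a =>
    measurableSet_lt ENNReal.measurable_ofReal measurable_const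
  have hvol : ∀ a : ℝ≥0∞,
      (∫⁻ s in Set.Ioi (0 : ℝ), ({s : ℝ | ENNReal.ofReal s < a}).indicator (1 : ℝ → ℝ≥0∞) s)
        = a := lintegral_ind_ofReal_lt
  have step1 : ∀ t : ℝ,
      ({t : ℝ | ENNReal.ofReal t < μ A}).indicator H t
        = ∫⁻ r in Set.Ioi (0 : ℝ), S.indicator 1 (t, r) := by
    intro t
    by_cases ht : ENNReal.ofReal t < μ A
    · have he : ∫⁻ r in Set.Ioi (0 : ℝ), S.indicator 1 (t, r)
          = ∫⁻ r in Set.Ioi (0 : ℝ),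
              ({r : ℝ | ENNReal.ofReal r < H t}).indicator (1 : ℝ → ℝ≥0∞) r :=
        lintegral_congr fun r =>
          ind_one_eq ⟨fun h => h.2, fun h => ⟨ht, h⟩⟩
      rw [he, hvol, Set.indicator_of_mem (show t ∈ {t : ℝ | ENNReal.ofReal t < μ A} from ht) H]
    · have he : ∫⁻ r in Set.Ioi (0 : ℝ), S.indicator 1 (t, r)
          = ∫⁻ r in Set.Ioi (0 : ℝ), (0 : ℝ≥0∞) :=
        lintegral_congr fun r => ind_one_zero (fun h => ht h.1)
      rw [he, lintegral_zero,
        Set.indicator_of_notMem (show t ∉ {t : ℝ | ENNReal.ofReal t < μ A} from ht) H]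
  calc ∫⁻ t in Set.Ioi (0 : ℝ), ({t : ℝ | ENNReal.ofReal t < μ A}).indicator H t
      = ∫⁻ t in Set.Ioi (0 : ℝ), (∫⁻ r in Set.Ioi (0 : ℝ), S.indicator 1 (t, r)) :=
        lintegral_congr step1
    _ = ∫⁻ r in Set.Ioi (0 : ℝ), (∫⁻ t in Set.Ioi (0 : ℝ), S.indicator 1 (t, r)) := by
        apply lintegral_lintegral_swap
        exact (measurable_const.indicator hS).aemeasurable
    _ ≤ ∫⁻ r in Set.Ioi (0 : ℝ), μ (A ∩ {x | ENNReal.ofReal r < W x}) := by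
        apply lintegral_mono
        intro r
        dsimp only
        set c := μ {x | W x ≤ ENNReal.ofReal r} with hc
        have hTmeas : MeasurableSet {t : ℝ | (t, r) ∈ S} :=
          hS.preimage (measurable_id.prodMk measurable_const)
        have he : ∫⁻ t in Set.Ioi (0 : ℝ), S.indicator 1 (t, r)
            = ∫⁻ t in Set.Ioi (0 : ℝ), ({t : ℝ | (t, r) ∈ S}).indicator (1 : ℝ → ℝ≥0∞) t :=
          lintegral_congr fun t => ind_one_eq Iff.rfl
        rw [he, lintegral_indicator_one hTmeas, Measure.restrict_apply hTmeas]
        have hsub : {t : ℝ | (t, r) ∈ S} ∩ Set.Ioi 0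
            ⊆ {t : ℝ | c ≤ ENNReal.ofReal t ∧ ENNReal.ofReal t < μ A} ∩ Set.Ioi 0 := by
          rintro t ⟨ht, h3⟩
          obtain ⟨h1, h2⟩ := hSdef ▸ ht
          exact ⟨⟨measure_le_of_lt_wstar μ W h2, h1⟩, h3⟩
        refine le_trans (measure_mono hsub) (le_trans (volume_band c (μ A)) ?_)
        have h1 : μ (A ∩ {x | W x ≤ ENNReal.ofReal r}) ≤ c :=
          measure_mono Set.inter_subset_right
        have h2 : μ A ≤ μ (A ∩ {x | ENNReal.ofReal r < W x})
            + μ (A ∩ {x | W x ≤ ENNReal.ofReal r}) := by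
          refine le_trans (measure_mono ?_) (measure_union_le _ _)
          intro x hx
          rcases le_or_gt (W x) (ENNReal.ofReal r) with h | h
          · exact Or.inr ⟨hx, h⟩
          · exact Or.inl ⟨hx, h⟩
        calc μ A - c ≤ μ A - μ (A ∩ {x | W x ≤ ENNReal.ofReal r}) :=
              tsub_le_tsub_left h1 _
          _ ≤ μ (A ∩ {x | ENNReal.ofReal r < W x}) := tsub_le_iff_right.mpr h2
    _ = ∫⁻ x in A, W x ∂μ := by
        set Q : Set (ℝ × Ω) := {q : ℝ × Ω | q.2 ∈ A ∧ ENNReal.ofReal q.1 < W q.2} with hQdef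
        have hQ : MeasurableSet Q := by
          have h1 : MeasurableSet {q : ℝ × Ω | q.2 ∈ A} := measurable_snd hA
          have h2 : MeasurableSet {q : ℝ × Ω | ENNReal.ofReal q.1 < W q.2} :=
            measurableSet_lt (ENNReal.measurable_ofReal.comp measurable_fst)
              (hW.comp measurable_snd)
          exact h1.inter h2
        have hmeq : ∀ r : ℝ, μ (A ∩ {x | ENNReal.ofReal r < W x})
            = ∫⁻ x, Q.indicator 1 (r, x) ∂μ := by
          intro r
          have hBmeas : MeasurableSet (A ∩ {x | ENNReal.ofReal r < W x}) :=
            hA.inter (measurableSet_lt measurable_const hW)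
          have he : ∫⁻ x, Q.indicator 1 (r, x) ∂μ
              = ∫⁻ x, (A ∩ {x | ENNReal.ofReal r < W x}).indicator (1 : Ω → ℝ≥0∞) x ∂μ :=
            lintegral_congr fun x => ind_one_eq Iff.rfl
          rw [he, lintegral_indicator_one hBmeas]
        calc ∫⁻ r in Set.Ioi (0 : ℝ), μ (A ∩ {x | ENNReal.ofReal r < W x})
            = ∫⁻ r in Set.Ioi (0 : ℝ), (∫⁻ x, Q.indicator 1 (r, x) ∂μ) :=
              lintegral_congr hmeq
          _ = ∫⁻ x, (∫⁻ r in Set.Ioi (0 : ℝ), Q.indicator 1 (r, x)) ∂μ := by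
              apply lintegral_lintegral_swap
              exact (measurable_const.indicator hQ).aemeasurable
          _ = ∫⁻ x, A.indicator W x ∂μ := by
              refine lintegral_congr fun x => ?_
              by_cases hx : x ∈ A
              · have he : ∫⁻ r in Set.Ioi (0 : ℝ), Q.indicator 1 (r, x)
                    = ∫⁻ r in Set.Ioi (0 : ℝ),
                        ({r : ℝ | ENNReal.ofReal r < W x}).indicator (1 : ℝ → ℝ≥0∞) r :=
                  lintegral_congr fun r =>
                    ind_one_eq ⟨fun h => h.2, fun h => ⟨hx, h⟩⟩
                rw [he, hvol, Set.indicator_of_mem hx]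
              · have he : ∫⁻ r in Set.Ioi (0 : ℝ), Q.indicator 1 (r, x)
                    = ∫⁻ r in Set.Ioi (0 : ℝ), (0 : ℝ≥0∞) :=
                  lintegral_congr fun r => ind_one_zero (fun h => hx h.1)
                rw [he, lintegral_zero, Set.indicator_of_notMem hx]
          _ = ∫⁻ x in A, W x ∂μ := lintegral_indicator hA W

/-- Hardy–Littlewood-type rearrangement inequality:
`∫₀^∞ f*(t) / (1/w)*(t) dt ≤ ∫_Ω f(x) w(x) dμ(x)`. -/
theorem rearrangement_pairing_le {Ω : Type*} [MeasurableSpace Ω]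
    (μ : Measure Ω) [SigmaFinite μ]
    (w : Ω → ℝ) (hwmeas : Measurable w) (hwpos : ∀ x, 0 < w x)
    (f : Ω → ℝ≥0∞) (hf : Measurable f) :
    (∫⁻ t in Set.Ioi (0 : ℝ),
        rearrangement μ f (ENNReal.ofReal t)
          / rearrangement μ (fun x => (ENNReal.ofReal (w x))⁻¹) (ENNReal.ofReal t))
      ≤ ∫⁻ x, f x * ENNReal.ofReal (w x) ∂μ := by
  set W : Ω → ℝ≥0∞ := fun x => ENNReal.ofReal (w x) with hWdef
  have hWmeas : Measurable W := ENNReal.measurable_ofReal.comp hwmeas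
  set G : ℝ → ℝ≥0∞ := fun t => rearrangement μ f (ENNReal.ofReal t) with hGdef
  have hGanti : Antitone G := fun t₁ t₂ h =>
    rearrangement_antitone μ f (ENNReal.ofReal_le_ofReal h)
  have hGmeas : Measurable G := hGanti.measurable
  set H : ℝ → ℝ≥0∞ := fun t => wstar μ W (ENNReal.ofReal t) with hHdef
  have hHmono : Monotone H := fun t₁ t₂ h =>
    wstar_monotone μ W (ENNReal.ofReal_le_ofReal h)
  have hHmeas : Measurable H := hHmono.measurable
  have M1 : ∀ t : ℝ,
      G t / rearrangement μ (fun x => (W x)⁻¹) (ENNReal.ofReal t) ≤ G t * H t := by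
    intro t
    rw [div_eq_mul_inv]
    exact mul_le_mul_right (inv_rearrangement_le_wstar μ W (ENNReal.ofReal t)) _
  refine le_trans (lintegral_mono fun t => M1 t) ?_
  set S₂ : Set (ℝ × ℝ) := {p : ℝ × ℝ | ENNReal.ofReal p.2 < G p.1} with hS₂def
  have hS₂ : MeasurableSet S₂ :=
    measurableSet_lt (ENNReal.measurable_ofReal.comp measurable_snd)
      (hGmeas.comp measurable_fst)
  set Q₂ : Set (ℝ × Ω) := {q : ℝ × Ω | ENNReal.ofReal q.1 < f q.2} with hQ₂def
  have hQ₂ : MeasurableSet Q₂ :=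
    measurableSet_lt (ENNReal.measurable_ofReal.comp measurable_fst)
      (hf.comp measurable_snd)
  have hAmeas : ∀ s : ℝ, MeasurableSet {x | ENNReal.ofReal s < f x} := fun s =>
    measurableSet_lt measurable_const hf
  have step2 : ∀ t : ℝ,
      G t * H t = ∫⁻ s in Set.Ioi (0 : ℝ), S₂.indicator 1 (t, s) * H t := by
    intro t
    have hm : Measurable fun s : ℝ => S₂.indicator (1 : ℝ × ℝ → ℝ≥0∞) (t, s) :=
      (measurable_const.indicator hS₂).comp measurable_prodMk_left
    rw [lintegral_mul_const _ hm]
    have he : (∫⁻ s in Set.Ioi (0 : ℝ), S₂.indicator 1 (t, s))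
        = ∫⁻ s in Set.Ioi (0 : ℝ),
            ({s : ℝ | ENNReal.ofReal s < G t}).indicator (1 : ℝ → ℝ≥0∞) s :=
      lintegral_congr fun s => ind_one_eq Iff.rfl
    rw [he, lintegral_ind_ofReal_lt]
  calc ∫⁻ t in Set.Ioi (0 : ℝ), G t * H t
      = ∫⁻ t in Set.Ioi (0 : ℝ), (∫⁻ s in Set.Ioi (0 : ℝ), S₂.indicator 1 (t, s) * H t) :=
        lintegral_congr step2
    _ = ∫⁻ s in Set.Ioi (0 : ℝ), (∫⁻ t in Set.Ioi (0 : ℝ), S₂.indicator 1 (t, s) * H t) := by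
        apply lintegral_lintegral_swap
        exact ((measurable_const.indicator hS₂).mul (hHmeas.comp measurable_fst)).aemeasurable
    _ ≤ ∫⁻ s in Set.Ioi (0 : ℝ), (∫⁻ x in {x | ENNReal.ofReal s < f x}, W x ∂μ) := by
        apply lintegral_mono
        intro s
        dsimp only
        have hpt : ∀ t : ℝ, S₂.indicator 1 (t, s) * H t
            ≤ ({t : ℝ | ENNReal.ofReal t < μ {x | ENNReal.ofReal s < f x}}).indicator
                (fun t => wstar μ W (ENNReal.ofReal t)) t := by
          intro t
          by_cases h : (t, s) ∈ S₂
          · have hlt : ENNReal.ofReal t < μ {x | ENNReal.ofReal s < f x} :=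
              lt_measure_of_lt_rearrangement μ f h
            rw [Set.indicator_of_mem h, Set.indicator_of_mem
              (show t ∈ {t : ℝ | ENNReal.ofReal t < μ {x | ENNReal.ofReal s < f x}} from hlt)]
            exact le_of_eq (by rw [Pi.one_apply, one_mul])
          · rw [Set.indicator_of_notMem h, zero_mul]
            exact zero_le
        exact le_trans (lintegral_mono hpt) (key_lemma μ hWmeas (hAmeas s))
    _ = ∫⁻ x, f x * W x ∂μ := by
        have hmeq : ∀ s : ℝ, (∫⁻ x in {x | ENNReal.ofReal s < f x}, W x ∂μ)
            = ∫⁻ x, Q₂.indicator 1 (s, x) * W x ∂μ := by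
          intro s
          rw [← lintegral_indicator (hAmeas s) W]
          refine lintegral_congr fun x => ?_
          by_cases hx : ENNReal.ofReal s < f x
          · rw [Set.indicator_of_mem (show x ∈ {x | ENNReal.ofReal s < f x} from hx),
              Set.indicator_of_mem (show (s, x) ∈ Q₂ from hx), Pi.one_apply, one_mul]
          · rw [Set.indicator_of_notMem (show x ∉ {x | ENNReal.ofReal s < f x} from hx),
              Set.indicator_of_notMem (show (s, x) ∉ Q₂ from hx), zero_mul]
        calc ∫⁻ s in Set.Ioi (0 : ℝ), (∫⁻ x in {x | ENNReal.ofReal s < f x}, W x ∂μ)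
            = ∫⁻ s in Set.Ioi (0 : ℝ), (∫⁻ x, Q₂.indicator 1 (s, x) * W x ∂μ) :=
              lintegral_congr hmeq
          _ = ∫⁻ x, (∫⁻ s in Set.Ioi (0 : ℝ), Q₂.indicator 1 (s, x) * W x) ∂μ := by
              apply lintegral_lintegral_swap
              exact ((measurable_const.indicator hQ₂).mul
                (hWmeas.comp measurable_snd)).aemeasurable
          _ = ∫⁻ x, f x * W x ∂μ := by
              refine lintegral_congr fun x => ?_
              have hm : Measurable fun s : ℝ => Q₂.indicator (1 : ℝ × Ω → ℝ≥0∞) (s, x) :=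
                (measurable_const.indicator hQ₂).comp (measurable_id.prodMk measurable_const)
              rw [lintegral_mul_const _ hm]
              have he : (∫⁻ s in Set.Ioi (0 : ℝ), Q₂.indicator 1 (s, x))
                  = ∫⁻ s in Set.Ioi (0 : ℝ),
                      ({s : ℝ | ENNReal.ofReal s < f x}).indicator (1 : ℝ → ℝ≥0∞) s :=
                lintegral_congr fun s => ind_one_eq Iff.rfl
              rw [he, lintegral_ind_ofReal_lt]
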